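/- Let p be an odd prime with 3 | (p-1) and ω ∈ F_p a primitive third root of unity. There is no polynomial c(x) = 1 + a_1 x + a_2 x^2 + a_3 x^3 + a_4 x^4 + a_5 x^l with 6 ≤ l ≤ 3p-2 and all a_i ∈ F_p^* such that c and its derivative c' vanish at 1, ω, and ω^2 as required by membership in the cyclic code with generator (x-1)^4(x-ω)^2(x-ω^2)^2 of length 3p; more precisely, if l ≢ 2 (mod 3), then c(1) = c(ω) = c(ω^2) = 0 forces some a_i = 0, and if l ≡ 2 (mod 3), then c'(1) = c'(ω) = c'(ω^2) = 0 forces a_3 = 0. -/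

import Mathlib

open Polynomial

theorem stmt16 (p : ℕ) [Fact p.Prime] (hodd : Odd p) (h3 : 3 ∣ p - 1)
    (ω : ZMod p) (hω3 : ω ^ 3 = 1) (hω1 : ω ≠ 1)
    (l : ℕ) (hl6 : 6 ≤ l) (hl : l ≤ 3 * p - 2)
    (a₁ a₂ a₃ a₄ a₅ : ZMod p)
    (c : Polynomial (ZMod p))
    (hc : c = 1 + C a₁ * X + C a₂ * X ^ 2 + C a₃ * X ^ 3 + C a₄ * X ^ 4 +
      C a₅ * X ^ l) :
    (l % 3 ≠ 2 →
      (c.eval 1 = 0 ∧ c.eval ω = 0 ∧ c.eval (ω ^ 2) = 0) →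
      (a₁ = 0 ∨ a₂ = 0 ∨ a₃ = 0 ∨ a₄ = 0 ∨ a₅ = 0)) ∧
    (l % 3 = 2 →
      ((derivative c).eval 1 = 0 ∧ (derivative c).eval ω = 0 ∧
        (derivative c).eval (ω ^ 2) = 0) →
      a₃ = 0) := by
  subst hc
  have hp3 : p ≠ 3 := by rintro rfl; omega
  have h3ne : (3 : ZMod p) ≠ 0 := by
    intro h
    have hdvd : (p : ℕ) ∣ 3 :=
      (ZMod.natCast_eq_zero_iff 3 p).mp (by exact_mod_cast h)
    have hp := (Fact.out : p.Prime)
    exact hp3 ((Nat.prime_dvd_prime_iff_eq hp (by norm_num)).mp hdvd)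
  have hsum : ω ^ 2 + ω + 1 = 0 := by
    have hfac : (ω - 1) * (ω ^ 2 + ω + 1) = 0 := by linear_combination hω3
    rcases mul_eq_zero.mp hfac with h | h
    · exact absurd (sub_eq_zero.mp h) hω1
    · exact h
  have key : ∀ n : ℕ, ω ^ n = ω ^ (n % 3) := by
    intro n
    conv_lhs => rw [← Nat.div_add_mod n 3]
    rw [pow_add, pow_mul, hω3, one_pow, one_mul]
  constructor
  · rintro hr ⟨h1, hw, hw2⟩
    simp at h1 hw hw2
    simp only [← pow_mul] at hw2
    rw [key 3, key 4, key l] at hw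
    rw [key (2*2), key (2*3), key (2*4), key (2*l)] at hw2
    norm_num at hw hw2
    have hcase : l % 3 = 0 ∨ l % 3 = 1 := by omega
    right; left
    rcases hcase with h0 | h0
    · rw [h0, pow_zero] at hw
      rw [show 2 * l % 3 = 0 from by omega, pow_zero] at hw2
      have h9 : (3 : ZMod p) * a₂ = 0 := by
        linear_combination h1 + ω * hw + ω ^ 2 * hw2 -
          (1 + a₁ + a₃ + a₄ + a₅) * hsum - (ω * (a₁ + a₄) + 2 * a₂) * hω3
      exact (mul_eq_zero.mp h9).resolve_left h3ne
    · rw [h0, pow_one] at hw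
      rw [show 2 * l % 3 = 2 from by omega] at hw2
      have h9 : (3 : ZMod p) * a₂ = 0 := by
        linear_combination h1 + ω * hw + ω ^ 2 * hw2 -
          (1 + a₁ + a₃ + a₄ + a₅) * hsum - (ω * (a₁ + a₄ + a₅) + 2 * a₂) * hω3
      exact (mul_eq_zero.mp h9).resolve_left h3ne
  · rintro hr ⟨h1, hw, hw2⟩
    simp [derivative_X_pow] at h1 hw hw2
    simp only [← pow_mul] at hw2
    rw [key 3, key (l-1)] at hw
    rw [key (2*2), key (2*3), key (2*(l-1))] at hw2
    norm_num at hw hw2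
    rw [show (l-1) % 3 = 1 from by omega, pow_one] at hw
    rw [show 2*(l-1) % 3 = 2 from by omega] at hw2
    have h9 : (9 : ZMod p) * a₃ = 0 := by
      linear_combination h1 + ω * hw + ω ^ 2 * hw2 -
        (a₁ + 2 * a₂ + 4 * a₄ + (l : ZMod p) * a₅) * hsum -
        (ω * (2 * a₂ + (l : ZMod p) * a₅) + 6 * a₃) * hω3
    have h9ne : (9 : ZMod p) ≠ 0 := by
      intro h
      exact h3ne (by have : (3:ZMod p) * 3 = 9 := by norm_num
                     rcases mul_eq_zero.mp (this.trans h) with h|h <;> exact h)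
    exact (mul_eq_zero.mp h9).resolve_left h9ne
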